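/- For every even integer s ≥ 5, the function p(θ) = sin((s+1)θ) + 3sin(sθ) - 4sin((s-1)θ) - 4sin(θ) has a root in the open interval (π/s², π/(4s)). -/

import Mathlib

open Real


lemma p_aux (b r c sn : ℝ) (hb0 : 0 < b) (hble : b ≤ 0.14) (hr2 : r^2 = 2)
    (hr0 : 0 < r) (h1 : 1 - b^2/2 < c) (h2 : b - b^3/4 < sn) :
    3 * (r/2) * (1 - c) + sn * (5 * (r/2) - 4) < 0 := by
  have hru : r < 1.42 := by nlinarith
  have hneg : 5 * (r/2) - 4 ≤ -0.45 := by nlinarith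
  have hbc : 0 < b - b^3/4 := by nlinarith
  have t1 : 3 * (r/2) * (1 - c) ≤ 1.065 * b^2 := by nlinarith
  have t2 : sn * (5 * (r/2) - 4) ≤ (b - b^3/4) * (-0.45) := by nlinarith
  nlinarith

/-- For every even integer `s ≥ 5`, the function
`p(θ) = sin((s+1)θ) + 3sin(sθ) - 4sin((s-1)θ) - 4sin θ` has a root in `(π/s², π/(4s))`. -/
theorem p_has_root (s : ℕ) (hs : 5 ≤ s) (hse : Even s) :
    ∃ θ ∈ Set.Ioo (π / (s : ℝ) ^ 2) (π / (4 * s)),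
      Real.sin (((s : ℝ) + 1) * θ) + 3 * Real.sin ((s : ℝ) * θ)
        - 4 * Real.sin (((s : ℝ) - 1) * θ) - 4 * Real.sin θ = 0 := by
  have hs6 : 6 ≤ s := by rcases hse with ⟨k, rfl⟩; omega
  have hsR : (6:ℝ) ≤ s := by exact_mod_cast hs6
  have hs0 : (0:ℝ) < s := by linarith
  set f : ℝ → ℝ := fun θ => Real.sin (((s : ℝ) + 1) * θ) + 3 * Real.sin ((s : ℝ) * θ)
        - 4 * Real.sin (((s : ℝ) - 1) * θ) - 4 * Real.sin θ with hf
  have key : ∀ θ, f θ = 3 * Real.sin ((s:ℝ)*θ) * (1 - Real.cos θ)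
      + Real.sin θ * (5 * Real.cos ((s:ℝ)*θ) - 4) := by
    intro θ
    have h1 : ((s:ℝ)+1)*θ = (s:ℝ)*θ + θ := by ring
    have h2 : ((s:ℝ)-1)*θ = (s:ℝ)*θ - θ := by ring
    simp only [hf, h1, h2, Real.sin_add, Real.sin_sub]
    ring
  set a := π / (s:ℝ)^2 with ha
  set b := π / (4*s) with hb
  have hπl : (3.141:ℝ) < π := by linarith [Real.pi_gt_d6]
  have hπu : π < 3.15 := by linarith [Real.pi_lt_d2]
  have ha0 : 0 < a := by positivity
  have hb0 : 0 < b := by positivity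
  have hab : a < b := by
    rw [ha, hb, div_lt_div_iff₀ (by positivity) (by positivity)]
    nlinarith [Real.pi_pos]
  have hsa : (s:ℝ) * a = π / s := by rw [ha]; field_simp
  have hsb : (s:ℝ) * b = π / 4 := by rw [hb]; field_simp
  -- bounds on a and π/s
  have hps_le : π / s ≤ π / 6 := by
    apply div_le_div_of_nonneg_left Real.pi_pos.le (by norm_num) hsR
  have hps_pos : 0 < π / s := by positivity
  have ha_lt : a < 1 := by
    rw [ha, div_lt_one (by positivity)]
    nlinarith
  have hfa : 0 < f a := by
    rw [key, hsa]
    have h1 : 0 < Real.sin (π / s) :=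
      Real.sin_pos_of_pos_of_lt_pi hps_pos (by nlinarith)
    have h2 : Real.cos a ≤ 1 := Real.cos_le_one a
    have h3 : 0 < Real.sin a :=
      Real.sin_pos_of_pos_of_lt_pi ha0 (by nlinarith)
    have h4 : 1 - (π/s)^2/2 < Real.cos (π/s) :=
      Real.one_sub_sq_div_two_lt_cos (by positivity)
    have h5 : (π/s)^2 ≤ (3.15/6)^2 := by
      apply pow_le_pow_left₀ hps_pos.le (by linarith)
    nlinarith
  have hfb : f b < 0 := by
    rw [key, hsb, Real.sin_pi_div_four, Real.cos_pi_div_four]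
    have hr2 : Real.sqrt 2 ^ 2 = 2 := Real.sq_sqrt (by norm_num)
    have hr0 : 0 < Real.sqrt 2 := Real.sqrt_pos.mpr (by norm_num)
    have hb_le : b ≤ 0.14 := by
      rw [hb, div_le_iff₀ (by positivity)]
      nlinarith
    have h1 : 1 - b^2/2 < Real.cos b := Real.one_sub_sq_div_two_lt_cos (ne_of_gt hb0)
    have h2 : b - b^3/4 < Real.sin b := by nlinarith [Real.sin_gt_sub_cube hb0, pow_pos hb0 3]
    exact p_aux b (Real.sqrt 2) (Real.cos b) (Real.sin b) hb0 hb_le hr2 hr0 h1 h2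
  have hcont : ContinuousOn f (Set.Icc a b) := by
    apply Continuous.continuousOn
    rw [hf]; fun_prop
  have h0 : (0:ℝ) ∈ Set.Ioo (f b) (f a) := ⟨hfb, hfa⟩
  obtain ⟨θ, hθ, hθ0⟩ := intermediate_value_Ioo' hab.le hcont h0
  exact ⟨θ, hθ, hθ0⟩
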